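/- Let {q_k : k ∈ ℕ} be a non-decreasing sequence of nonnegative numbers with q_0 > 0. Then there is a constant c (depending only on m) such that for every N ∈ ℕ₊, every n ≥ M_N, and every x ∈ G_m, |(1/Q_n) Σ_{j=M_N}^{n} q_{n−j} D_j(x)| ≤ (c/M_N) Σ_{j=0}^{|n|} M_j |K_{M_j}(x)|, where |n| denotes the largest index j with n_j ≠ 0 in the expansion n = Σ_j n_j M_j. -/

import Mathlib

open MeasureTheory Complex Filter Finset Topology ENNReal NNReal Asymptotics

noncomputable section

namespace Vilenkin

/-- Discrete topology on each cyclic group. -/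
instance (n : ℕ) : TopologicalSpace (ZMod n) := ⊥

instance (n : ℕ) : DiscreteTopology (ZMod n) := ⟨rfl⟩

/-- Discrete measurable structure on each cyclic group. -/
instance (n : ℕ) : MeasurableSpace (ZMod n) := ⊤

instance (n : ℕ) : BorelSpace (ZMod n) := ⟨borel_eq_top_of_discrete.symm⟩

instance (n : ℕ) : IsTopologicalAddGroup (ZMod n) :=
  { continuous_add := continuous_of_discreteTopology
    continuous_neg := continuous_of_discreteTopology }

variable (m : ℕ → ℕ)

/-- The Vilenkin group: the product of the cyclic groups `ZMod (m k)`. -/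
abbrev G := ∀ k : ℕ, ZMod (m k)

/-- The generalized powers `M_0 = 1`, `M_{k+1} = m_k M_k`. -/
def M : ℕ → ℕ
  | 0 => 1
  | k + 1 => m k * M k

/-- The `k`-th digit of `n` in the generalized number system based on `m`. -/
def digit (n k : ℕ) : ℕ := n / M m k % m k

/-- The normalized Haar (product) probability measure on the bounded Vilenkin group. -/
def haarM (hm : ∀ k, 2 ≤ m k) : Measure (G m) :=
  haveI : ∀ k, NeZero (m k) := fun k => ⟨by have := hm k; omega⟩
  haveI : ∀ k, CompactSpace (ZMod (m k)) := fun k => Finite.compactSpace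
  Measure.addHaarMeasure (⊤ : TopologicalSpace.PositiveCompacts (G m))

/-- The generalized Rademacher functions. -/
def rad (k : ℕ) (x : G m) : ℂ :=
  Complex.exp (2 * Real.pi * Complex.I * ((x k).val : ℂ) / (m k : ℂ))

/-- The Vilenkin system. -/
def psi (n : ℕ) (x : G m) : ℂ :=
  ∏ k ∈ Finset.range (n + 1), rad m k x ^ digit m n k

/-- The Dirichlet kernels. -/
def Dker (n : ℕ) (x : G m) : ℂ := ∑ k ∈ Finset.range n, psi m k x

/-- The Fejér kernels. -/
def Kker (n : ℕ) (x : G m) : ℂ := (n : ℂ)⁻¹ * ∑ k ∈ Finset.range n, Dker m k x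

/-- `Q_n = q_0 + ⋯ + q_{n-1}`. -/
def Q (q : ℕ → ℝ) (n : ℕ) : ℝ := ∑ k ∈ Finset.range n, q k

/-- The Nörlund kernels. -/
def Fker (q : ℕ → ℝ) (n : ℕ) (x : G m) : ℂ :=
  (Q q n : ℂ)⁻¹ * ∑ k ∈ Finset.Icc 1 n, (q (n - k) : ℂ) * Dker m k x

/-- The `T`-mean kernels. -/
def Tker (q : ℕ → ℝ) (n : ℕ) (x : G m) : ℂ :=
  (Q q n : ℂ)⁻¹ * ∑ k ∈ Finset.Icc 1 n, (q k : ℂ) * Dker m k x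

/-- Vilenkin-Fourier coefficients. -/
def fourierCoeff (hm : ∀ k, 2 ≤ m k) (f : G m → ℂ) (n : ℕ) : ℂ :=
  ∫ x, f x * (starRingEnd ℂ) (psi m n x) ∂(haarM m hm)

/-- Partial sums of the Vilenkin-Fourier series. -/
def S (hm : ∀ k, 2 ≤ m k) (f : G m → ℂ) (n : ℕ) (x : G m) : ℂ :=
  ∑ k ∈ Finset.range n, fourierCoeff m hm f k * psi m k x

/-- The Nörlund means. -/
def t (hm : ∀ k, 2 ≤ m k) (q : ℕ → ℝ) (n : ℕ) (f : G m → ℂ) (x : G m) : ℂ :=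
  (Q q n : ℂ)⁻¹ * ∑ k ∈ Finset.Icc 1 n, (q (n - k) : ℂ) * S m hm f k x

/-- The Vilenkin interval `I_n(x)`. -/
def cyl (n : ℕ) (x : G m) : Set (G m) := {y | ∀ j < n, y j = x j}

/-- The largest index `j` such that the digit `n_j` is nonzero (for `n ≥ 1`). -/
def ord (n : ℕ) : ℕ := Nat.findGreatest (fun j => digit m n j ≠ 0) n

/-- The element of `G_m` having `r` at the `s`-th coordinate and `0` elsewhere. -/
def spike (s r : ℕ) : G m := fun k => if k = s then (r : ZMod (m k)) else 0

/-- The operator `W_A` of Goginava and Gogoladze. -/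
def W (hm : ∀ k, 2 ≤ m k) (f : G m → ℂ) (A : ℕ) (x : G m) : ℝ :=
  ∑ s ∈ Finset.range A, (M m s : ℝ) *
    ∑ r ∈ Finset.Icc 1 (m s - 1),
      ∫ u in cyl m A (x - spike m s r), ‖f u - f x‖ ∂(haarM m hm)

/-- `x` is a Vilenkin–Lebesgue point of `f`. -/
def VilenkinLebesguePoint (hm : ∀ k, 2 ≤ m k) (f : G m → ℂ) (x : G m) : Prop :=
  Tendsto (fun A => W m hm f A x) atTop (𝓝 0)

/-- `x` is a Lebesgue point of `f`. -/
def LebesguePoint (hm : ∀ k, 2 ≤ m k) (f : G m → ℂ) (x : G m) : Prop :=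
  Tendsto (fun n => (M m n : ℂ) * ∫ u in cyl m n x, f u ∂(haarM m hm)) atTop (𝓝 (f x))


section Aux

variable {m : ℕ → ℕ}

lemma M_pos (hm : ∀ k, 2 ≤ m k) (k : ℕ) : 0 < M m k := by
  induction k with
  | zero => simp [M]
  | succ k ih => have := hm k; simpa [M] using Nat.mul_pos (by omega) ih

lemma succ_le_M (hm : ∀ k, 2 ≤ m k) (k : ℕ) : k + 1 ≤ M m k := by
  induction k with
  | zero => simp [M]
  | succ k ih =>
    have h1 : 2 * (k + 1) ≤ m k * M m k := Nat.mul_le_mul (hm k) ih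
    simpa [M] using by omega

lemma M_le_succ (hm : ∀ k, 2 ≤ m k) (k : ℕ) : M m k ≤ M m (k + 1) := by
  have h1 : 1 * M m k ≤ m k * M m k := Nat.mul_le_mul_right _ (by have := hm k; omega)
  simpa [M] using h1

lemma M_mono (hm : ∀ k, 2 ≤ m k) : Monotone (M m) :=
  monotone_nat_of_le_succ (M_le_succ hm)

lemma M_dvd (hm : ∀ k, 2 ≤ m k) {k l : ℕ} (h : k ≤ l) : M m k ∣ M m l := by
  induction l, h using Nat.le_induction with
  | base => exact dvd_rfl
  | succ l hl ih => exact ih.trans ⟨m l, by simp [M, Nat.mul_comm]⟩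

lemma digit_lt (hm : ∀ k, 2 ≤ m k) (n k : ℕ) : digit m n k < m k :=
  Nat.mod_lt _ (by have := hm k; omega)

lemma digit_eq_zero {n k : ℕ} (h : n < M m k) : digit m n k = 0 := by
  unfold digit; rw [Nat.div_eq_of_lt h]; simp

lemma digit_add (hm : ∀ k, 2 ≤ m k) {A a b : ℕ} (ha : a < m A) (hb : b < M m A) (k : ℕ) :
    digit m (a * M m A + b) k = if k = A then a else digit m b k := by
  rcases lt_trichotomy k A with hk | rfl | hk
  · rw [if_neg hk.ne]
    obtain ⟨c, hc⟩ : M m (k + 1) ∣ M m A := M_dvd hm hk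
    have hMk : 0 < M m k := M_pos hm k
    unfold digit
    have : a * M m A + b = b + (a * c * m k) * M m k := by
      rw [hc]; simp [M]; ring
    rw [this, Nat.add_mul_div_right _ _ hMk, Nat.add_mul_mod_self_right]
  · rw [if_pos rfl]
    unfold digit
    have hMA : 0 < M m k := M_pos hm k
    rw [Nat.add_comm, Nat.add_mul_div_right _ _ hMA, Nat.div_eq_of_lt hb, Nat.zero_add,
      Nat.mod_eq_of_lt ha]
  · rw [if_neg hk.ne']
    have h1 : a * M m A + b < M m (A + 1) := by
      have : (a + 1) * M m A ≤ m A * M m A := Nat.mul_le_mul_right _ ha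
      have h2 : a * M m A + b < (a + 1) * M m A := by
        have := hb; nlinarith [M_pos hm A]
      simpa [M] using lt_of_lt_of_le h2 this
    have h2 : a * M m A + b < M m k := lt_of_lt_of_le h1 (M_mono hm hk)
    have h3 : b < M m k := lt_of_lt_of_le hb (M_mono hm hk.le)
    rw [digit_eq_zero h2, digit_eq_zero h3]

lemma psi_prod_ext (hm : ∀ k, 2 ≤ m k) (x : G m) {n T : ℕ} (hT : n + 1 ≤ T) :
    psi m n x = ∏ k ∈ Finset.range T, rad m k x ^ digit m n k := by
  unfold psi
  refine Finset.prod_subset (Finset.range_subset_range.2 hT) ?_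
  intro k hk hnk
  simp only [Finset.mem_range, not_lt] at hnk
  have : n < M m k := lt_of_lt_of_le (by omega) (succ_le_M hm k)
  rw [digit_eq_zero this, pow_zero]

lemma psi_zero (x : G m) : psi m 0 x = 1 := by
  simp [psi, digit]

lemma psi_add (hm : ∀ k, 2 ≤ m k) {A a b : ℕ} (ha : a < m A) (hb : b < M m A) (x : G m) :
    psi m (a * M m A + b) x = rad m A x ^ a * psi m b x := by
  set T := a * M m A + b + 1 + (A + 1) with hT
  have hT1 : a * M m A + b + 1 ≤ T := by omega
  have hT2 : b + 1 ≤ T := by omega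
  have hAT : A ∈ Finset.range T := by simp [hT]; omega
  rw [psi_prod_ext hm x hT1, psi_prod_ext hm x hT2]
  have h1 : ∀ k ∈ Finset.range T, rad m k x ^ digit m (a * M m A + b) k
      = if k = A then rad m A x ^ a else rad m k x ^ digit m b k := by
    intro k _
    rw [digit_add hm ha hb k]
    split_ifs with h
    · subst h; rfl
    · rfl
  rw [Finset.prod_congr rfl h1]
  rw [← Finset.mul_prod_erase _ _ hAT, if_pos rfl]
  rw [← Finset.mul_prod_erase _ (fun k => rad m k x ^ digit m b k) hAT]
  have hbA : digit m b A = 0 := digit_eq_zero hb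
  rw [hbA, pow_zero, one_mul]
  congr 1
  refine Finset.prod_congr rfl ?_
  intro k hk
  rw [if_neg (Finset.ne_of_mem_erase hk)]

lemma norm_rad (hm : ∀ k, 2 ≤ m k) (i : ℕ) (x : G m) : ‖rad m i x‖ = 1 := by
  unfold rad
  have h : 2 * (Real.pi : ℂ) * Complex.I * ((x i).val : ℂ) / (m i : ℂ)
      = ((2 * Real.pi * ((x i).val : ℝ) / (m i : ℝ) : ℝ) : ℂ) * Complex.I := by
    push_cast; ring
  rw [h, Complex.norm_exp_ofReal_mul_I]

lemma rad_pow (hm : ∀ k, 2 ≤ m k) (i : ℕ) (x : G m) : rad m i x ^ m i = 1 := by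
  have hm0 : (m i : ℂ) ≠ 0 := Nat.cast_ne_zero.2 (by have := hm i; omega)
  unfold rad
  rw [← Complex.exp_nat_mul]
  have h : (m i : ℂ) * (2 * (Real.pi : ℂ) * Complex.I * ((x i).val : ℂ) / (m i : ℂ))
      = (((x i).val : ℤ) : ℂ) * (2 * (Real.pi : ℂ) * Complex.I) := by
    field_simp
    push_cast
    ring
  rw [h]
  exact Complex.exp_eq_one_iff.2 ⟨((x i).val : ℤ), rfl⟩

lemma rad_eq_one_iff (hm : ∀ k, 2 ≤ m k) (i : ℕ) (x : G m) : rad m i x = 1 ↔ x i = 0 := by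
  haveI : NeZero (m i) := ⟨by have := hm i; omega⟩
  have hm0 : (m i : ℂ) ≠ 0 := Nat.cast_ne_zero.2 (by have := hm i; omega)
  have h2pi : (2 * (Real.pi : ℂ) * Complex.I) ≠ 0 := by
    simp [Real.pi_ne_zero, Complex.I_ne_zero]
  constructor
  · intro h
    unfold rad at h
    obtain ⟨n, hn⟩ := Complex.exp_eq_one_iff.1 h
    have hv : ((x i).val : ℂ) = (n : ℂ) * (m i : ℂ) := by
      have h1 : 2 * (Real.pi : ℂ) * Complex.I * ((x i).val : ℂ)
          = (n : ℂ) * (2 * (Real.pi : ℂ) * Complex.I) * (m i : ℂ) := by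
        field_simp at hn
        linear_combination (2 * (Real.pi : ℂ) * Complex.I) * hn
      have h2 : (2 * (Real.pi : ℂ) * Complex.I) * ((x i).val : ℂ)
          = (2 * (Real.pi : ℂ) * Complex.I) * ((n : ℂ) * (m i : ℂ)) := by
        linear_combination h1
      exact mul_left_cancel₀ h2pi h2
    have hvz : ((x i).val : ℤ) = n * (m i : ℤ) := by exact_mod_cast hv
    have hdvd : (m i : ℤ) ∣ ((x i).val : ℤ) := ⟨n, by linarith [hvz]⟩
    have hdvd' : m i ∣ (x i).val := Int.natCast_dvd_natCast.1 hdvd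
    have hlt : (x i).val < m i := ZMod.val_lt (x i)
    have : (x i).val = 0 := Nat.eq_zero_of_dvd_of_lt hdvd' hlt
    exact (ZMod.val_eq_zero (x i)).1 this
  · intro h
    unfold rad
    rw [h, ZMod.val_zero]
    simp

lemma geom_rad (hm : ∀ k, 2 ≤ m k) (i : ℕ) (x : G m) :
    ∑ l ∈ Finset.range (m i), rad m i x ^ l = if x i = 0 then (m i : ℂ) else 0 := by
  split_ifs with h
  · have : rad m i x = 1 := (rad_eq_one_iff hm i x).2 h
    simp [this]
  · have hne : rad m i x ≠ 1 := fun hc => h ((rad_eq_one_iff hm i x).1 hc)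
    rw [geom_sum_eq hne, rad_pow hm i x]
    simp

lemma Dker_zero (x : G m) : Dker m 0 x = 0 := by simp [Dker]

lemma Dker_one (x : G m) : Dker m 1 x = 1 := by
  simp [Dker, psi_zero]

lemma Dker_add' (hm : ∀ k, 2 ≤ m k) {A a c : ℕ} (ha : a < m A) (hc : c ≤ M m A) (x : G m) :
    Dker m (a * M m A + c) x = Dker m (a * M m A) x + rad m A x ^ a * Dker m c x := by
  unfold Dker
  rw [Finset.sum_range_add, Finset.mul_sum]
  congr 1
  refine Finset.sum_congr rfl ?_
  intro j hj
  simp only [Finset.mem_range] at hj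
  exact psi_add hm ha (lt_of_lt_of_le hj hc) x

lemma Dker_mul (hm : ∀ k, 2 ≤ m k) {A a : ℕ} (ha : a ≤ m A) (x : G m) :
    Dker m (a * M m A) x = (∑ k ∈ Finset.range a, rad m A x ^ k) * Dker m (M m A) x := by
  induction a with
  | zero => simp [Dker]
  | succ a ih =>
    have ha' : a < m A := by omega
    have h1 : (a + 1) * M m A = a * M m A + M m A := by ring
    rw [h1, Dker_add' hm ha' le_rfl x, ih (by omega), Finset.sum_range_succ]
    ring

lemma M_eq_prod (A : ℕ) : M m A = ∏ i ∈ Finset.range A, m i := by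
  induction A with
  | zero => simp [M]
  | succ A ih => rw [Finset.prod_range_succ, ← ih]; simp [M, Nat.mul_comm]

lemma Dker_M_prod (hm : ∀ k, 2 ≤ m k) (A : ℕ) (x : G m) :
    Dker m (M m A) x = ∏ i ∈ Finset.range A, (∑ l ∈ Finset.range (m i), rad m i x ^ l) := by
  induction A with
  | zero => simpa [M] using Dker_one x
  | succ A ih =>
    have h1 : M m (A + 1) = m A * M m A := rfl
    rw [h1, Dker_mul hm le_rfl x, ih, Finset.prod_range_succ]
    ring

lemma Dker_M_eq (hm : ∀ k, 2 ≤ m k) (A : ℕ) (x : G m) :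
    Dker m (M m A) x = if (∀ i < A, x i = 0) then (M m A : ℂ) else 0 := by
  rw [Dker_M_prod hm A x]
  split_ifs with h
  · have : ∀ i ∈ Finset.range A, (∑ l ∈ Finset.range (m i), rad m i x ^ l) = (m i : ℂ) := by
      intro i hi
      simp only [Finset.mem_range] at hi
      rw [geom_rad hm i x, if_pos (h i hi)]
    rw [Finset.prod_congr rfl this, M_eq_prod A]
    push_cast
    rfl
  · push_neg at h
    obtain ⟨i, hi, hxi⟩ := h
    refine Finset.prod_eq_zero (Finset.mem_range.2 hi) ?_
    rw [geom_rad hm i x, if_neg hxi]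


/-- Partial sums of Dirichlet kernels: `Lsum n = n K_n`. -/
def Lsum (m : ℕ → ℕ) (n : ℕ) (x : G m) : ℂ := ∑ k ∈ Finset.range n, Dker m k x

lemma Kker_eq_Lsum (n : ℕ) (x : G m) : Kker m n x = (n : ℂ)⁻¹ * Lsum m n x := rfl

lemma norm_Lsum_eq (hn : 0 < n) (x : G m) : ‖Lsum m n x‖ = (n : ℝ) * ‖Kker m n x‖ := by
  have h0 : ((n : ℂ)) ≠ 0 := Nat.cast_ne_zero.2 hn.ne'
  rw [Kker_eq_Lsum, norm_mul, norm_inv, Complex.norm_natCast]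
  field_simp

lemma norm_psi (hm : ∀ k, 2 ≤ m k) (n : ℕ) (x : G m) : ‖psi m n x‖ = 1 := by
  unfold psi
  rw [norm_prod]
  refine Finset.prod_eq_one fun k _ => ?_
  rw [norm_pow, norm_rad hm k x, one_pow]

lemma norm_Dker_le (hm : ∀ k, 2 ≤ m k) (n : ℕ) (x : G m) : ‖Dker m n x‖ ≤ (n : ℝ) := by
  unfold Dker
  calc ‖∑ k ∈ Finset.range n, psi m k x‖ ≤ ∑ k ∈ Finset.range n, ‖psi m k x‖ :=
        norm_sum_le _ _
    _ = (n : ℝ) := by simp [norm_psi hm]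

lemma psi_eq_one (hm : ∀ k, 2 ≤ m k) {A j : ℕ} (hj : j < M m A) (x : G m)
    (hx : ∀ i < A, x i = 0) : psi m j x = 1 := by
  unfold psi
  refine Finset.prod_eq_one fun k _ => ?_
  by_cases hkA : k < A
  · rw [(rad_eq_one_iff hm k x).2 (hx k hkA), one_pow]
  · rw [digit_eq_zero (lt_of_lt_of_le hj (M_mono hm (by omega))), pow_zero]

lemma Lsum_M_on (hm : ∀ k, 2 ≤ m k) {A : ℕ} (x : G m) (hx : ∀ i < A, x i = 0) :
    Lsum m (M m A) x = ((∑ k ∈ Finset.range (M m A), k : ℕ) : ℂ) := by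
  unfold Lsum Dker
  push_cast
  refine Finset.sum_congr rfl fun k hk => ?_
  simp only [Finset.mem_range] at hk
  have : ∀ j ∈ Finset.range k, psi m j x = 1 := fun j hj =>
    psi_eq_one hm (lt_trans (Finset.mem_range.1 hj) hk) x hx
  rw [Finset.sum_congr rfl this]
  simp

lemma gauss_ge {N : ℕ} (hN : 2 ≤ N) : (N : ℝ) * (N : ℝ) ≤ 4 * ((∑ k ∈ Finset.range N, k : ℕ) : ℝ) := by
  have h := Finset.sum_range_id_mul_two N
  obtain ⟨K, rfl⟩ : ∃ K, N = K + 2 := ⟨N - 2, by omega⟩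
  have h2 : (∑ k ∈ Finset.range (K+2), k) * 2 = (K+2) * (K+1) := by simpa using h
  have h4 : (K+2) * (K+2) ≤ 4 * (∑ k ∈ Finset.range (K+2), k) := by nlinarith
  exact_mod_cast h4

lemma Dker_M_le_K (hm : ∀ k, 2 ≤ m k) {A : ℕ} (hA : 1 ≤ A) (x : G m) :
    ‖Dker m (M m A) x‖ ≤ 4 * ‖Kker m (M m A) x‖ := by
  have hM2 : 2 ≤ M m A := le_trans (by have := hm 0; simp [M]; omega)
    (M_mono hm hA)
  by_cases hx : ∀ i < A, x i = 0
  · rw [Dker_M_eq hm A x, if_pos hx]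
    have hL : ‖Lsum m (M m A) x‖ = ((∑ k ∈ Finset.range (M m A), k : ℕ) : ℝ) := by
      rw [Lsum_M_on hm x hx]
      rw [Complex.norm_natCast]
    have hKn : (M m A : ℝ) * ‖Kker m (M m A) x‖ = ((∑ k ∈ Finset.range (M m A), k : ℕ) : ℝ) := by
      rw [← norm_Lsum_eq (by omega) x, hL]
    have hg := gauss_ge hM2
    have hMpos : (0:ℝ) < (M m A : ℝ) := by positivity
    rw [Complex.norm_natCast]
    rw [← hKn] at hg
    nlinarith [norm_nonneg (Kker m (M m A) x)]
  · rw [Dker_M_eq hm A x, if_neg hx]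
    simp only [norm_zero]
    positivity

lemma M_one (hm : ∀ k, 2 ≤ m k) : M m 1 = m 0 := by simp [M]

lemma one_le_MK1 (hm : ∀ k, 2 ≤ m k) (x : G m) :
    1 ≤ (M m 1 : ℝ) * ‖Kker m (M m 1) x‖ := by
  rw [← norm_Lsum_eq (M_pos hm 1) x]
  by_cases hx : x 0 = 0
  · have hx' : ∀ i < 1, x i = 0 := by intro i hi; interval_cases i; exact hx
    rw [Lsum_M_on hm x hx', Complex.norm_natCast]
    have h2 : 2 ≤ M m 1 := by rw [M_one hm]; exact hm 0
    have : 1 ≤ (∑ k ∈ Finset.range (M m 1), k) :=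
      Finset.single_le_sum (f := fun k => k) (fun i _ => Nat.zero_le i)
        (Finset.mem_range.2 (by omega))
    exact_mod_cast this
  · set r := rad m 0 x with hr
    have hne : r ≠ 1 := fun hc => hx ((rad_eq_one_iff hm 0 x).1 hc)
    have hpsi : ∀ j < m 0, psi m j x = r ^ j := by
      intro j hj
      have h1 : j * M m 0 + 0 = j := by simp [M]
      have := psi_add hm (A := 0) (a := j) (b := 0) hj (by simp [M]) x
      rw [h1] at this
      rw [this, psi_zero, mul_one]
    have hD : ∀ k ≤ m 0, Dker m k x = (r ^ k - 1) / (r - 1) := by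
      intro k hk
      unfold Dker
      rw [show (∑ j ∈ Finset.range k, psi m j x) = ∑ j ∈ Finset.range k, r ^ j from
        Finset.sum_congr rfl fun j hj => hpsi j (lt_of_lt_of_le (Finset.mem_range.1 hj) hk)]
      exact geom_sum_eq hne k
    have hgeom : ∑ l ∈ Finset.range (m 0), r ^ l = 0 := by
      rw [hr, geom_rad hm 0 x, if_neg hx]
    have hLs : Lsum m (M m 1) x = (0 - (m 0 : ℂ)) / (r - 1) := by
      unfold Lsum
      rw [M_one hm]
      rw [Finset.sum_congr rfl fun k hk => hD k (le_of_lt (Finset.mem_range.1 hk))]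
      rw [← Finset.sum_div]
      congr 1
      rw [Finset.sum_sub_distrib, hgeom]
      simp
    have hrne : r - 1 ≠ 0 := sub_ne_zero.2 hne
    rw [hLs, norm_div, zero_sub, norm_neg, Complex.norm_natCast]
    have hden : ‖r - 1‖ ≤ 2 := by
      calc ‖r - 1‖ ≤ ‖r‖ + ‖(1:ℂ)‖ := norm_sub_le _ _
        _ = 2 := by rw [hr, norm_rad hm 0 x, norm_one]; norm_num
    have hdenpos : 0 < ‖r - 1‖ := norm_pos_iff.2 hrne
    have hm2 : (2:ℝ) ≤ (m 0 : ℝ) := by exact_mod_cast hm 0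
    rw [le_div_iff₀ hdenpos]
    linarith

lemma digit_ne_of (hm : ∀ k, 2 ≤ m k) {n j : ℕ} (h1 : M m j ≤ n) (h2 : n < M m (j+1)) :
    digit m n j ≠ 0 := by
  have hMj : 0 < M m j := M_pos hm j
  have hd1 : 1 ≤ n / M m j := (Nat.one_le_div_iff hMj).2 h1
  have hd2 : n / M m j < m j := (Nat.div_lt_iff_lt_mul hMj).2 (by
    have : M m (j+1) = m j * M m j := rfl
    omega)
  unfold digit
  rw [Nat.mod_eq_of_lt hd2]
  omega

lemma ord_spec (hm : ∀ k, 2 ≤ m k) {n : ℕ} (hn : 1 ≤ n) :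
    M m (ord m n) ≤ n ∧ n < M m (ord m n + 1) := by
  set P' : ℕ → Prop := fun j => M m j ≤ n with hP'
  set j := Nat.findGreatest P' n with hjdef
  have h0 : P' 0 := by simpa [hP', M] using hn
  have hj1 : P' j := Nat.findGreatest_spec (Nat.zero_le n) h0
  have hj2 : n < M m (j+1) := by
    by_contra hcon
    push_neg at hcon
    have hle : j + 1 ≤ n := by have := succ_le_M hm (j+1); omega
    exact (Nat.findGreatest_is_greatest (Nat.lt_succ_self j) hle) hcon
  have hjn : j ≤ n := by have := succ_le_M hm j; simp only [hP'] at hj1; omega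
  have hPj : digit m n j ≠ 0 := digit_ne_of hm hj1 hj2
  have h1 : j ≤ ord m n := Nat.le_findGreatest (P := fun j => digit m n j ≠ 0) hjn hPj
  have h2 : digit m n (ord m n) ≠ 0 :=
    Nat.findGreatest_spec (P := fun j => digit m n j ≠ 0) hjn hPj
  have h3 : M m (ord m n) ≤ n := by
    by_contra hcon
    push_neg at hcon
    exact h2 (digit_eq_zero hcon)
  have h4 : ord m n ≤ j := by
    by_contra hcon
    push_neg at hcon
    have hon : ord m n ≤ n := by have := succ_le_M hm (ord m n); omega
    exact (Nat.findGreatest_is_greatest hcon hon) h3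
  have hoj : ord m n = j := le_antisymm h4 h1
  exact ⟨h3, by rw [hoj]; exact hj2⟩

lemma le_ord (hm : ∀ k, 2 ≤ m k) {N n : ℕ} (h : M m N ≤ n) : N ≤ ord m n := by
  have hn : 1 ≤ n := le_trans (M_pos hm N) h
  have h2 := (ord_spec hm hn).2
  by_contra hc
  push_neg at hc
  exact absurd (le_trans (M_mono hm hc) h) (not_le.2 h2)

lemma ord_lt_of_lt (hm : ∀ k, 2 ≤ m k) {n A : ℕ} (hn : 1 ≤ n) (h : n < M m A) :
    ord m n < A := by
  have h1 := (ord_spec hm hn).1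
  by_contra hc
  push_neg at hc
  exact absurd (le_trans (M_mono hm hc) h1) (not_le.2 h)

lemma ord_le_ord (hm : ∀ k, 2 ≤ m k) {j n : ℕ} (h1 : 1 ≤ j) (h : j ≤ n) :
    ord m j ≤ ord m n := by
  have hn : 1 ≤ n := le_trans h1 h
  have := (ord_spec hm h1).1
  have h2 := (ord_spec hm hn).2
  by_contra hc
  push_neg at hc
  have : M m (ord m n + 1) ≤ M m (ord m j) := M_mono hm hc
  omega


lemma pair_le_sum {f : ℕ → ℝ} (hf : ∀ i, 0 ≤ f i) {i j n : ℕ} (hi : i < n) (hj : j < n)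
    (hij : i ≠ j) : f i + f j ≤ ∑ k ∈ Finset.range n, f k := by
  have hsub : ({i, j} : Finset ℕ) ⊆ Finset.range n := by
    intro k hk
    simp only [Finset.mem_insert, Finset.mem_singleton] at hk
    rcases hk with rfl | rfl <;> simp [hi, hj]
  calc f i + f j = ∑ k ∈ ({i, j} : Finset ℕ), f k := (Finset.sum_pair hij).symm
    _ ≤ _ := Finset.sum_le_sum_of_subset_of_nonneg hsub (fun k _ _ => hf k)

lemma Lsum_add (hm : ∀ k, 2 ≤ m k) {A a c : ℕ} (ha : a < m A) (hc : c ≤ M m A) (x : G m) :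
    Lsum m (a * M m A + c) x
      = Lsum m (a * M m A) x + (c : ℂ) * Dker m (a * M m A) x + rad m A x ^ a * Lsum m c x := by
  unfold Lsum
  rw [Finset.sum_range_add]
  have h1 : ∀ j ∈ Finset.range c, Dker m (a * M m A + j) x
      = Dker m (a * M m A) x + rad m A x ^ a * Dker m j x := fun j hj =>
    Dker_add' hm ha (le_trans (le_of_lt (Finset.mem_range.1 hj)) hc) x
  rw [Finset.sum_congr rfl h1, Finset.sum_add_distrib, Finset.sum_const, ← Finset.mul_sum]
  simp only [Finset.card_range, nsmul_eq_mul]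
  ring

lemma Lsum_mul (hm : ∀ k, 2 ≤ m k) {A a : ℕ} (ha : a ≤ m A) (x : G m) :
    Lsum m (a * M m A) x = ∑ t ∈ Finset.range a,
      ((M m A : ℂ) * Dker m (t * M m A) x + rad m A x ^ t * Lsum m (M m A) x) := by
  induction a with
  | zero => simp [Lsum]
  | succ a ih =>
    have ha' : a < m A := by omega
    rw [show (a+1) * M m A = a * M m A + M m A from by ring,
      Lsum_add hm ha' le_rfl x, ih (by omega), Finset.sum_range_succ]
    ring

lemma norm_Dker_mulM (hm : ∀ k, 2 ≤ m k) {A a : ℕ} (ha : a ≤ m A) (x : G m) :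
    ‖Dker m (a * M m A) x‖ ≤ (a : ℝ) * ‖Dker m (M m A) x‖ := by
  rw [Dker_mul hm ha x, norm_mul]
  have h1 : ‖∑ k ∈ Finset.range a, rad m A x ^ k‖ ≤ (a : ℝ) := by
    calc ‖∑ k ∈ Finset.range a, rad m A x ^ k‖ ≤ ∑ k ∈ Finset.range a, ‖rad m A x ^ k‖ :=
          norm_sum_le _ _
      _ = (a : ℝ) := by simp [norm_pow, norm_rad hm]
  exact mul_le_mul_of_nonneg_right h1 (norm_nonneg _)

lemma norm_Dker_bound (hm : ∀ k, 2 ≤ m k) {B : ℕ} (hB : ∀ k, m k ≤ B) :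
    ∀ n : ℕ, ∀ x : G m, ‖Dker m n x‖ ≤ (5*(B:ℝ)) *
      ∑ i ∈ Finset.range (max (ord m n) 1 + 1), (M m i : ℝ) * ‖Kker m (M m i) x‖ := by
  have hB2 : 2 ≤ B := le_trans (hm 0) (hB 0)
  have hBR : (2:ℝ) ≤ (B:ℝ) := by exact_mod_cast hB2
  intro n
  induction n using Nat.strong_induction_on with
  | _ n ih =>
  intro x
  have hterm : ∀ i, 0 ≤ (M m i : ℝ) * ‖Kker m (M m i) x‖ := fun i => by positivity
  have hSn : ∀ s : Finset ℕ, 0 ≤ ∑ i ∈ s, (M m i : ℝ) * ‖Kker m (M m i) x‖ :=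
    fun s => Finset.sum_nonneg fun i _ => hterm i
  rcases Nat.eq_zero_or_pos n with rfl | hn
  · rw [Dker_zero, norm_zero]; positivity
  set A := ord m n with hA
  set a := n / M m A with ha
  set b := n % M m A with hb
  have hMA : 0 < M m A := M_pos hm A
  have hdecomp : a * M m A + b = n := by
    rw [ha, hb, Nat.mul_comm]; exact Nat.div_add_mod n (M m A)
  have hb1 : b < M m A := Nat.mod_lt n hMA
  have ha1 : 1 ≤ a := (Nat.one_le_div_iff hMA).2 (ord_spec hm hn).1
  have ha2 : a < m A := (Nat.div_lt_iff_lt_mul hMA).2 (by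
    have h2 := (ord_spec hm hn).2
    have h3 : M m (ord m n + 1) = m A * M m A := rfl
    omega)
  have haB : (a : ℝ) ≤ (B : ℝ) := by exact_mod_cast le_trans (le_of_lt ha2) (hB A)
  have hsplit : Dker m n x = Dker m (a * M m A) x + rad m A x ^ a * Dker m b x := by
    rw [← hdecomp]; exact Dker_add' hm ha2 (le_of_lt hb1) x
  have hn1 : ‖Dker m n x‖ ≤ (a:ℝ) * ‖Dker m (M m A) x‖ + ‖Dker m b x‖ := by
    rw [hsplit]
    calc ‖Dker m (a * M m A) x + rad m A x ^ a * Dker m b x‖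
        ≤ ‖Dker m (a * M m A) x‖ + ‖rad m A x ^ a * Dker m b x‖ := norm_add_le _ _
      _ ≤ (a:ℝ) * ‖Dker m (M m A) x‖ + ‖Dker m b x‖ := by
          rw [norm_mul, norm_pow, norm_rad hm, one_pow, one_mul]
          exact add_le_add_left (norm_Dker_mulM hm (le_of_lt ha2) x) _
  rcases Nat.eq_zero_or_pos A with hA0 | hA1
  · -- A = 0 : b = 0, M_A = 1, Dker M_0 = Dker 1 = 1
    have hM0 : M m A = 1 := by rw [hA0]; rfl
    have hb0 : b = 0 := by omega
    have hD1 : ‖Dker m (M m A) x‖ = 1 := by rw [hM0, Dker_one, norm_one]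
    have h1 : ‖Dker m n x‖ ≤ (B:ℝ) := by
      rw [hb0, Dker_zero, norm_zero] at hn1
      rw [hD1] at hn1
      linarith
    have h2 : (1:ℝ) ≤ (M m 1 : ℝ) * ‖Kker m (M m 1) x‖ := one_le_MK1 hm x
    have h3 : (M m 1 : ℝ) * ‖Kker m (M m 1) x‖
        ≤ ∑ i ∈ Finset.range (max A 1 + 1), (M m i : ℝ) * ‖Kker m (M m i) x‖ :=
      Finset.single_le_sum (f := fun i => (M m i:ℝ) * ‖Kker m (M m i) x‖)
        (fun i _ => hterm i) (Finset.mem_range.2 (Nat.lt_succ_of_le (le_max_right A 1)))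
    nlinarith [hSn (Finset.range (max A 1 + 1))]
  · -- A ≥ 1
    have hmax : max A 1 = A := by omega
    have hDK : ‖Dker m (M m A) x‖ ≤ 4 * ‖Kker m (M m A) x‖ := Dker_M_le_K hm hA1 x
    have htA : (a:ℝ) * ‖Dker m (M m A) x‖ ≤ 4*(B:ℝ) * ((M m A : ℝ) * ‖Kker m (M m A) x‖) := by
      have hM1 : (1:ℝ) ≤ (M m A : ℝ) := by exact_mod_cast hMA
      calc (a:ℝ) * ‖Dker m (M m A) x‖ ≤ (B:ℝ) * (4 * ‖Kker m (M m A) x‖) :=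
            mul_le_mul haB hDK (norm_nonneg _) (by positivity)
        _ ≤ (B:ℝ) * (4 * ((M m A:ℝ) * ‖Kker m (M m A) x‖)) := by
            have h1 : ‖Kker m (M m A) x‖ ≤ (M m A : ℝ) * ‖Kker m (M m A) x‖ := by
              nlinarith [norm_nonneg (Kker m (M m A) x)]
            gcongr
        _ = 4*(B:ℝ) * ((M m A : ℝ) * ‖Kker m (M m A) x‖) := by ring
    rcases Nat.eq_zero_or_pos b with hb0 | hbpos
    · rw [hb0, Dker_zero, norm_zero] at hn1
      have h3 : (M m A : ℝ) * ‖Kker m (M m A) x‖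
          ≤ ∑ i ∈ Finset.range (max A 1 + 1), (M m i : ℝ) * ‖Kker m (M m i) x‖ :=
        Finset.single_le_sum (f := fun i => (M m i:ℝ) * ‖Kker m (M m i) x‖)
          (fun i _ => hterm i) (Finset.mem_range.2 (Nat.lt_succ_of_le (le_max_left A 1)))
      nlinarith [hSn (Finset.range (max A 1 + 1)), hterm A]
    · -- b ≥ 1
      have hbn : b < n := lt_of_lt_of_le hb1 (ord_spec hm hn).1
      have hordb : ord m b < A := ord_lt_of_lt hm hbpos hb1
      rcases Nat.eq_zero_or_pos (ord m b) with hob0 | hob1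
      · -- ord b = 0 : b < M m 1, so ‖Dker b‖ ≤ b ≤ B
        have hbM1 : b < M m 1 := by
          have := (ord_spec hm hbpos).2; rwa [hob0] at this
        have hbB : (b : ℝ) ≤ (B:ℝ) := by
          have hMone : M m 1 = m 0 := M_one hm
          have : b ≤ B := by have := hB 0; omega
          exact_mod_cast this
        have hDb : ‖Dker m b x‖ ≤ (B:ℝ) * ((M m 1 : ℝ) * ‖Kker m (M m 1) x‖) := by
          have h1 := le_trans (norm_Dker_le hm b x) hbB
          nlinarith [one_le_MK1 hm x]
        rcases Nat.eq_or_lt_of_le hA1 with hA1' | hA2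
        · -- A = 1
          have ht1 : (M m A : ℝ) * ‖Kker m (M m A) x‖
              ≤ ∑ i ∈ Finset.range (max A 1 + 1), (M m i : ℝ) * ‖Kker m (M m i) x‖ :=
            Finset.single_le_sum (f := fun i => (M m i:ℝ) * ‖Kker m (M m i) x‖)
              (fun i _ => hterm i) (Finset.mem_range.2 (Nat.lt_succ_of_le (le_max_left A 1)))
          have hDb2 : ‖Dker m b x‖ ≤ (B:ℝ) * ((M m A : ℝ) * ‖Kker m (M m A) x‖) := by
            rw [← hA1']; exact hDb
          nlinarith [hterm A, hSn (Finset.range (max A 1 + 1))]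
        · -- A ≥ 2
          have hpair : (M m 1 : ℝ) * ‖Kker m (M m 1) x‖ + (M m A : ℝ) * ‖Kker m (M m A) x‖
              ≤ ∑ i ∈ Finset.range (max A 1 + 1), (M m i : ℝ) * ‖Kker m (M m i) x‖ :=
            pair_le_sum (fun i => hterm i) (Nat.lt_succ_of_le (le_trans (by omega) (le_max_left A 1)))
              (Nat.lt_succ_of_le (le_max_left A 1)) (by omega)
          nlinarith [hterm A, hterm 1]
      · -- ord b ≥ 1
        have hIH := ih b hbn x
        have hmaxb : max (ord m b) 1 = ord m b := by omega
        rw [hmaxb] at hIH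
        have hsub : ∑ i ∈ Finset.range (ord m b + 1), (M m i : ℝ) * ‖Kker m (M m i) x‖
            ≤ ∑ i ∈ Finset.range A, (M m i : ℝ) * ‖Kker m (M m i) x‖ :=
          Finset.sum_le_sum_of_subset_of_nonneg
            (Finset.range_subset_range.2 (by omega)) (fun i _ _ => hterm i)
        have hfin : ∑ i ∈ Finset.range (max A 1 + 1), (M m i : ℝ) * ‖Kker m (M m i) x‖
            = ∑ i ∈ Finset.range A, (M m i : ℝ) * ‖Kker m (M m i) x‖
              + (M m A : ℝ) * ‖Kker m (M m A) x‖ := by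
          rw [hmax, Finset.sum_range_succ]
        rw [hfin]
        have h5 : (0:ℝ) ≤ (B:ℝ) * ((M m A:ℝ) * ‖Kker m (M m A) x‖) :=
          mul_nonneg (by positivity) (hterm A)
        have h6 : 5*(B:ℝ) * (∑ i ∈ Finset.range (ord m b + 1), (M m i : ℝ) * ‖Kker m (M m i) x‖)
            ≤ 5*(B:ℝ) * (∑ i ∈ Finset.range A, (M m i : ℝ) * ‖Kker m (M m i) x‖) :=
          mul_le_mul_of_nonneg_left hsub (by positivity)
        linarith

lemma Lsum_bound (hm : ∀ k, 2 ≤ m k) {B : ℕ} (hB : ∀ k, m k ≤ B) :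
    ∀ n : ℕ, ∀ x : G m, ‖Lsum m n x‖ ≤ (5*(B:ℝ)^2 + 5*(B:ℝ)) *
      ∑ i ∈ Finset.range (max (ord m n) 1 + 1), (M m i : ℝ) * ‖Kker m (M m i) x‖ := by
  have hB2 : 2 ≤ B := le_trans (hm 0) (hB 0)
  have hBR : (2:ℝ) ≤ (B:ℝ) := by exact_mod_cast hB2
  intro n
  induction n using Nat.strong_induction_on with
  | _ n ih =>
  intro x
  have hterm : ∀ i, 0 ≤ (M m i : ℝ) * ‖Kker m (M m i) x‖ := fun i => by positivity
  have hSn : ∀ s : Finset ℕ, 0 ≤ ∑ i ∈ s, (M m i : ℝ) * ‖Kker m (M m i) x‖ :=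
    fun s => Finset.sum_nonneg fun i _ => hterm i
  rcases Nat.eq_zero_or_pos n with rfl | hn
  · simp only [Lsum, Finset.range_zero, Finset.sum_empty, norm_zero]
    positivity
  set A := ord m n with hA
  have hsmall : ∀ k : ℕ, k < M m 1 →
      ‖Lsum m k x‖ ≤ (B:ℝ)^2 * ((M m 1:ℝ) * ‖Kker m (M m 1) x‖) := by
    intro k hk
    have hkB : (k:ℝ) ≤ (B:ℝ) := by
      have h1 : M m 1 = m 0 := M_one hm
      have : k ≤ B := by have := hB 0; omega
      exact_mod_cast this
    have h1 : ‖Lsum m k x‖ ≤ (k:ℝ) * (k:ℝ) := by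
      unfold Lsum
      calc ‖∑ j ∈ Finset.range k, Dker m j x‖ ≤ ∑ j ∈ Finset.range k, ‖Dker m j x‖ :=
            norm_sum_le _ _
        _ ≤ ∑ j ∈ Finset.range k, (k:ℝ) := Finset.sum_le_sum (fun j hj =>
            le_trans (norm_Dker_le hm j x)
              (by exact_mod_cast le_of_lt (Finset.mem_range.1 hj)))
        _ = (k:ℝ) * (k:ℝ) := by
            rw [Finset.sum_const, Finset.card_range, nsmul_eq_mul]
    have hk0 : (0:ℝ) ≤ (k:ℝ) := Nat.cast_nonneg k
    have e1 : (k:ℝ)*(k:ℝ) ≤ (B:ℝ)*(B:ℝ) := mul_self_le_mul_self hk0 hkB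
    have e2 : (B:ℝ)^2 * 1 ≤ (B:ℝ)^2 * ((M m 1:ℝ) * ‖Kker m (M m 1) x‖) :=
      mul_le_mul_of_nonneg_left (one_le_MK1 hm x) (by positivity)
    nlinarith
  rcases Nat.eq_zero_or_pos A with hA0 | hA1
  · -- ord n = 0 : n < M m 1
    have hnM : n < M m 1 := by
      have h := (ord_spec hm hn).2
      rw [← hA, hA0] at h
      exact h
    have h1 := hsmall n hnM
    have h3 : (M m 1 : ℝ) * ‖Kker m (M m 1) x‖
        ≤ ∑ i ∈ Finset.range (max A 1 + 1), (M m i : ℝ) * ‖Kker m (M m i) x‖ :=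
      Finset.single_le_sum (f := fun i => (M m i:ℝ) * ‖Kker m (M m i) x‖)
        (fun i _ => hterm i) (Finset.mem_range.2 (Nat.lt_succ_of_le (le_max_right A 1)))
    have h4 : (5*(B:ℝ)^2 + 5*(B:ℝ)) * ((M m 1 : ℝ) * ‖Kker m (M m 1) x‖)
        ≤ (5*(B:ℝ)^2 + 5*(B:ℝ)) *
          ∑ i ∈ Finset.range (max A 1 + 1), (M m i : ℝ) * ‖Kker m (M m i) x‖ :=
      mul_le_mul_of_nonneg_left h3 (by positivity)
    have h5 : (B:ℝ)^2 * ((M m 1 : ℝ) * ‖Kker m (M m 1) x‖)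
        ≤ (5*(B:ℝ)^2 + 5*(B:ℝ)) * ((M m 1 : ℝ) * ‖Kker m (M m 1) x‖) :=
      mul_le_mul_of_nonneg_right (by nlinarith [sq_nonneg (B:ℝ)]) (hterm 1)
    linarith
  · have hmax : max A 1 = A := by omega
    set a := n / M m A with ha
    set b := n % M m A with hb
    have hMA : 0 < M m A := M_pos hm A
    have hdecomp : a * M m A + b = n := by
      rw [ha, hb, Nat.mul_comm]; exact Nat.div_add_mod n (M m A)
    have hb1 : b < M m A := Nat.mod_lt n hMA
    have ha1 : 1 ≤ a := (Nat.one_le_div_iff hMA).2 (ord_spec hm hn).1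
    have ha2 : a < m A := (Nat.div_lt_iff_lt_mul hMA).2 (by
      have h2 := (ord_spec hm hn).2
      have h3 : M m (ord m n + 1) = m A * M m A := rfl
      omega)
    have haB : (a : ℝ) ≤ (B : ℝ) := by exact_mod_cast le_trans (le_of_lt ha2) (hB A)
    have hDK : ‖Dker m (M m A) x‖ ≤ 4 * ‖Kker m (M m A) x‖ := Dker_M_le_K hm hA1 x
    have hLM : ‖Lsum m (M m A) x‖ = (M m A : ℝ) * ‖Kker m (M m A) x‖ := norm_Lsum_eq hMA x
    set tA : ℝ := (M m A : ℝ) * ‖Kker m (M m A) x‖ with htAdef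
    have htA0 : 0 ≤ tA := hterm A
    have hM1R : (1:ℝ) ≤ (M m A : ℝ) := by exact_mod_cast hMA
    have hDt : ∀ t, t ≤ a → ‖Dker m (t * M m A) x‖ ≤ 4*(B:ℝ) * ‖Kker m (M m A) x‖ := by
      intro t ht
      have htB : (t:ℝ) ≤ (B:ℝ) := by
        have : t ≤ B := le_trans (le_trans ht (le_of_lt ha2)) (hB A)
        exact_mod_cast this
      calc ‖Dker m (t * M m A) x‖ ≤ (t:ℝ) * ‖Dker m (M m A) x‖ :=
            norm_Dker_mulM hm (le_trans ht (le_of_lt ha2)) x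
        _ ≤ (B:ℝ) * (4 * ‖Kker m (M m A) x‖) :=
            mul_le_mul htB hDK (norm_nonneg _) (by positivity)
        _ = 4*(B:ℝ) * ‖Kker m (M m A) x‖ := by ring
    have hL1 : ‖Lsum m (a * M m A) x‖ ≤ (4*(B:ℝ)^2 + (B:ℝ)) * tA := by
      rw [Lsum_mul hm (le_of_lt ha2) x]
      have hterm' : ∀ t ∈ Finset.range a,
          ‖(M m A : ℂ) * Dker m (t * M m A) x + rad m A x ^ t * Lsum m (M m A) x‖
            ≤ (4*(B:ℝ) + 1) * tA := by
        intro t ht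
        have ht' := le_of_lt (Finset.mem_range.1 ht)
        calc ‖(M m A : ℂ) * Dker m (t * M m A) x + rad m A x ^ t * Lsum m (M m A) x‖
            ≤ ‖(M m A : ℂ) * Dker m (t * M m A) x‖
              + ‖rad m A x ^ t * Lsum m (M m A) x‖ := norm_add_le _ _
          _ = (M m A : ℝ) * ‖Dker m (t * M m A) x‖ + ‖Lsum m (M m A) x‖ := by
              rw [norm_mul, norm_mul, norm_pow, norm_rad hm, one_pow, one_mul,
                Complex.norm_natCast]
          _ ≤ (M m A : ℝ) * (4*(B:ℝ) * ‖Kker m (M m A) x‖) + tA := by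
              rw [hLM]
              exact add_le_add_left
                (mul_le_mul_of_nonneg_left (hDt t ht') (by positivity)) _
          _ = (4*(B:ℝ) + 1) * tA := by rw [htAdef]; ring
      refine le_trans (norm_sum_le _ _) (le_trans (Finset.sum_le_sum hterm') ?_)
      rw [Finset.sum_const, Finset.card_range, nsmul_eq_mul]
      nlinarith [mul_le_mul_of_nonneg_right haB
        (mul_nonneg (by positivity : (0:ℝ) ≤ 4*(B:ℝ)+1) htA0)]
    have hmid : ‖(b:ℂ) * Dker m (a * M m A) x‖ ≤ 4*(B:ℝ) * tA := by
      rw [norm_mul, Complex.norm_natCast]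
      have hbM : (b:ℝ) ≤ (M m A:ℝ) := by exact_mod_cast le_of_lt hb1
      calc (b:ℝ) * ‖Dker m (a * M m A) x‖
          ≤ (M m A:ℝ) * (4*(B:ℝ) * ‖Kker m (M m A) x‖) :=
            mul_le_mul hbM (hDt a le_rfl) (norm_nonneg _) (by positivity)
        _ = 4*(B:ℝ) * tA := by rw [htAdef]; ring
    have hsplit : ‖Lsum m n x‖ ≤ (4*(B:ℝ)^2 + 5*(B:ℝ)) * tA + ‖Lsum m b x‖ := by
      have heq := Lsum_add hm ha2 (le_of_lt hb1) x
      rw [hdecomp] at heq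
      rw [heq]
      have h1 : ‖Lsum m (a * M m A) x + (b:ℂ) * Dker m (a * M m A) x
            + rad m A x ^ a * Lsum m b x‖
          ≤ ‖Lsum m (a * M m A) x‖ + ‖(b:ℂ) * Dker m (a * M m A) x‖
            + ‖rad m A x ^ a * Lsum m b x‖ :=
        le_trans (norm_add_le _ _) (add_le_add_left (norm_add_le _ _) _)
      have h2 : ‖rad m A x ^ a * Lsum m b x‖ = ‖Lsum m b x‖ := by
        rw [norm_mul, norm_pow, norm_rad hm, one_pow, one_mul]
      rw [h2] at h1
      refine le_trans h1 ?_
      linarith [hL1, hmid]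
    set C : ℝ := 5*(B:ℝ)^2 + 5*(B:ℝ) with hC
    have hCpos : (0:ℝ) < C := by positivity
    have htASum : tA ≤ ∑ i ∈ Finset.range (max A 1 + 1), (M m i : ℝ) * ‖Kker m (M m i) x‖ :=
      Finset.single_le_sum (f := fun i => (M m i:ℝ) * ‖Kker m (M m i) x‖)
        (fun i _ => hterm i) (Finset.mem_range.2 (Nat.lt_succ_of_le (le_max_left A 1)))
    have hB2tA : (4*(B:ℝ)^2 + 5*(B:ℝ)) * tA ≤ C * tA := by
      nlinarith [htA0]
    rcases Nat.eq_zero_or_pos b with hb0 | hbpos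
    · -- b = 0
      rw [hb0] at hsplit
      have h0 : Lsum m 0 x = 0 := by simp [Lsum]
      rw [h0, norm_zero] at hsplit
      have h4 : C * tA ≤ C * ∑ i ∈ Finset.range (max A 1 + 1),
          (M m i : ℝ) * ‖Kker m (M m i) x‖ := mul_le_mul_of_nonneg_left htASum (le_of_lt hCpos)
      linarith
    · have hbn : b < n := lt_of_lt_of_le hb1 (ord_spec hm hn).1
      have hordb : ord m b < A := ord_lt_of_lt hm hbpos hb1
      rcases Nat.eq_zero_or_pos (ord m b) with hob0 | hob1
      · -- ord b = 0
        have hbM1 : b < M m 1 := by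
          have := (ord_spec hm hbpos).2; rwa [hob0] at this
        have hLb := hsmall b hbM1
        rcases Nat.eq_or_lt_of_le hA1 with hA1' | hA2
        · -- A = 1
          have hLb2 : ‖Lsum m b x‖ ≤ (B:ℝ)^2 * tA := by
            rw [htAdef, ← hA1']; exact hLb
          have h4 : C * tA ≤ C * ∑ i ∈ Finset.range (max A 1 + 1),
              (M m i : ℝ) * ‖Kker m (M m i) x‖ :=
            mul_le_mul_of_nonneg_left htASum (le_of_lt hCpos)
          have h5 : (4*(B:ℝ)^2 + 5*(B:ℝ)) * tA + (B:ℝ)^2 * tA = C * tA := by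
            rw [hC]; ring
          linarith
        · -- A ≥ 2
          have hpair : (M m 1 : ℝ) * ‖Kker m (M m 1) x‖ + tA
              ≤ ∑ i ∈ Finset.range (max A 1 + 1), (M m i : ℝ) * ‖Kker m (M m i) x‖ := by
            rw [htAdef]
            exact pair_le_sum (fun i => hterm i)
              (Nat.lt_succ_of_le (le_trans (by omega) (le_max_left A 1)))
              (Nat.lt_succ_of_le (le_max_left A 1)) (by omega)
          have h4 : C * ((M m 1 : ℝ) * ‖Kker m (M m 1) x‖ + tA)
              ≤ C * ∑ i ∈ Finset.range (max A 1 + 1), (M m i : ℝ) * ‖Kker m (M m i) x‖ :=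
            mul_le_mul_of_nonneg_left hpair (le_of_lt hCpos)
          have h5 : (B:ℝ)^2 * ((M m 1 : ℝ) * ‖Kker m (M m 1) x‖)
              ≤ C * ((M m 1 : ℝ) * ‖Kker m (M m 1) x‖) := by
            exact mul_le_mul_of_nonneg_right
              (by rw [hC]; nlinarith [sq_nonneg (B:ℝ)]) (hterm 1)
          linarith
      · -- ord b ≥ 1
        have hIH := ih b hbn x
        have hmaxb : max (ord m b) 1 = ord m b := by omega
        rw [hmaxb] at hIH
        have hsub : ∑ i ∈ Finset.range (ord m b + 1), (M m i : ℝ) * ‖Kker m (M m i) x‖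
            ≤ ∑ i ∈ Finset.range A, (M m i : ℝ) * ‖Kker m (M m i) x‖ :=
          Finset.sum_le_sum_of_subset_of_nonneg
            (Finset.range_subset_range.2 (by omega)) (fun i _ _ => hterm i)
        have hfin : ∑ i ∈ Finset.range (max A 1 + 1), (M m i : ℝ) * ‖Kker m (M m i) x‖
            = ∑ i ∈ Finset.range A, (M m i : ℝ) * ‖Kker m (M m i) x‖ + tA := by
          rw [hmax, Finset.sum_range_succ, htAdef]
        rw [hfin]
        have h6 : C * (∑ i ∈ Finset.range (ord m b + 1), (M m i : ℝ) * ‖Kker m (M m i) x‖)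
            ≤ C * (∑ i ∈ Finset.range A, (M m i : ℝ) * ‖Kker m (M m i) x‖) :=
          mul_le_mul_of_nonneg_left hsub (le_of_lt hCpos)
        have h7 : (0:ℝ) ≤ C * tA := mul_nonneg (le_of_lt hCpos) htA0
        linarith

end Aux

theorem statement12 (hm : ∀ k, 2 ≤ m k) (hbdd : ∃ B, ∀ k, m k ≤ B)
    (q : ℕ → ℝ) (hq : ∀ k, 0 ≤ q k) (hq0 : 0 < q 0) (hmono : Monotone q) :
    ∃ c : ℝ, ∀ N : ℕ, 0 < N → ∀ n : ℕ, M m N ≤ n → ∀ x : G m,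
      ‖(Q q n : ℂ)⁻¹ * ∑ j ∈ Finset.Icc (M m N) n, (q (n - j) : ℂ) * Dker m j x‖ ≤
        c / (M m N) * ∑ j ∈ Finset.range (ord m n + 1), (M m j : ℝ) * ‖Kker m (M m j) x‖ := by
  obtain ⟨B, hB⟩ := hbdd
  have hB2 : 2 ≤ B := le_trans (hm 0) (hB 0)
  have hBR : (2:ℝ) ≤ (B:ℝ) := by exact_mod_cast hB2
  set C : ℝ := 5*(B:ℝ)^2 + 5*(B:ℝ) with hC
  have hCpos : (0:ℝ) < C := by positivity
  refine ⟨2*C + 5*(B:ℝ), ?_⟩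
  intro N hN n hMn x
  set l := M m N with hl
  have hl1 : 0 < l := M_pos hm N
  have hn1 : 1 ≤ n := le_trans hl1 hMn
  have hM1l : M m 1 ≤ l := M_mono hm hN
  set S : ℝ := ∑ j ∈ Finset.range (ord m n + 1), (M m j : ℝ) * ‖Kker m (M m j) x‖ with hS
  have hterm : ∀ i, 0 ≤ (M m i : ℝ) * ‖Kker m (M m i) x‖ := fun i => by positivity
  have hS0 : 0 ≤ S := by rw [hS]; exact Finset.sum_nonneg fun i _ => hterm i
  have hordn : 1 ≤ ord m n := le_ord hm (le_trans hM1l hMn)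
  -- uniform bound on the partial sums of Dirichlet kernels
  have hLj : ∀ j, l ≤ j → j ≤ n → ‖Lsum m j x‖ ≤ C * S := by
    intro j hlj hjn
    have hj1 : 1 ≤ j := le_trans hl1 hlj
    have hordj : 1 ≤ ord m j := le_ord hm (le_trans hM1l hlj)
    have h1 := Lsum_bound hm hB j x
    have hmaxj : max (ord m j) 1 = ord m j := by omega
    rw [hmaxj] at h1
    have hsub : ∑ i ∈ Finset.range (ord m j + 1), (M m i : ℝ) * ‖Kker m (M m i) x‖ ≤ S := by
      rw [hS]
      exact Finset.sum_le_sum_of_subset_of_nonneg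
        (Finset.range_subset_range.2 (by have := ord_le_ord hm hj1 hjn; omega))
        (fun i _ _ => hterm i)
    exact le_trans h1 (by rw [hC] at *; exact mul_le_mul_of_nonneg_left hsub (by positivity))
  have hLn1 : ‖Lsum m (n+1) x‖ ≤ (C + 5*(B:ℝ)) * S := by
    have h1 : Lsum m (n+1) x = Lsum m n x + Dker m n x := by
      unfold Lsum; rw [Finset.sum_range_succ]
    have h2 := hLj n hMn le_rfl
    have h3 := norm_Dker_bound hm hB n x
    have hmaxn : max (ord m n) 1 = ord m n := by omega
    rw [hmaxn, ← hS] at h3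
    calc ‖Lsum m (n+1) x‖ ≤ ‖Lsum m n x‖ + ‖Dker m n x‖ := by
          rw [h1]; exact norm_add_le _ _
      _ ≤ C * S + 5*(B:ℝ) * S := add_le_add h2 h3
      _ = (C + 5*(B:ℝ)) * S := by ring
  -- reindex the sum
  set p := n - l + 1 with hp
  have hlp : l + p = n + 1 := by omega
  have hp1 : p - 1 = n - l := by omega
  have habel : ∑ j ∈ Finset.Icc l n, (q (n - j) : ℂ) * Dker m j x
      = ∑ i ∈ Finset.range p, (q (n - l - i) : ℂ) * Dker m (l + i) x := by
    rw [show Finset.Icc l n = Finset.Ico l (n+1) from by rw [Finset.Ico_add_one_right_eq_Icc],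
      Finset.sum_Ico_eq_sum_range, show n + 1 - l = p from by omega]
    refine Finset.sum_congr rfl fun i _ => ?_
    rw [show n - (l + i) = n - l - i from by omega]
  -- partial sums of the Dirichlet blocks
  have hg : ∀ k : ℕ, ∑ j ∈ Finset.range k, Dker m (l + j) x = Lsum m (l + k) x - Lsum m l x := by
    intro k
    have h1 : Lsum m (l + k) x
        = Lsum m l x + ∑ j ∈ Finset.range k, Dker m (l + j) x := by
      unfold Lsum; exact Finset.sum_range_add (fun t => Dker m t x) l k
    rw [h1]; ring
  -- Abel summation
  have habel2 : ∑ i ∈ Finset.range p, (q (n - l - i) : ℂ) * Dker m (l + i) x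
      = (q 0 : ℂ) * (Lsum m (n+1) x - Lsum m l x)
        - ∑ i ∈ Finset.range (p-1),
            ((q (n - l - (i+1)) : ℂ) - (q (n - l - i) : ℂ))
              * (Lsum m (l + (i + 1)) x - Lsum m l x) := by
    have hb := Finset.sum_range_by_parts (fun i => ((q (n - l - i) : ℝ) : ℂ))
        (fun i => Dker m (l + i) x) p
    simp only [smul_eq_mul] at hb
    rw [hb, hg p, hlp, hp1, Nat.sub_self]
    congr 1
    refine Finset.sum_congr rfl fun i _ => ?_
    rw [hg (i+1)]
  -- norms of the coefficients
  have hcoef : ∀ i : ℕ, ‖((q (n - l - (i+1)) : ℂ) - (q (n - l - i) : ℂ))‖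
      = q (n - l - i) - q (n - l - (i+1)) := by
    intro i
    rw [← Complex.ofReal_sub, Complex.norm_real, Real.norm_eq_abs, abs_of_nonpos
      (by have := hmono (show n - l - (i+1) ≤ n - l - i from by omega); linarith)]
    ring
  -- norms of the kernel differences
  have hGb : ∀ i : ℕ, i < p - 1 → ‖Lsum m (l + (i+1)) x - Lsum m l x‖ ≤ (2*C + 5*(B:ℝ)) * S := by
    intro i hi
    have h1 : l + (i + 1) ≤ n := by omega
    calc ‖Lsum m (l + (i+1)) x - Lsum m l x‖
        ≤ ‖Lsum m (l + (i+1)) x‖ + ‖Lsum m l x‖ := norm_sub_le _ _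
      _ ≤ C * S + C * S := add_le_add (hLj _ (by omega) h1) (hLj l le_rfl hMn)
      _ ≤ (2*C + 5*(B:ℝ)) * S := by nlinarith [hS0, hBR]
  have hfirst : ‖(q 0 : ℂ) * (Lsum m (n+1) x - Lsum m l x)‖ ≤ q 0 * ((2*C + 5*(B:ℝ)) * S) := by
    rw [norm_mul, Complex.norm_real, Real.norm_eq_abs, _root_.abs_of_nonneg (hq 0)]
    refine mul_le_mul_of_nonneg_left ?_ (hq 0)
    calc ‖Lsum m (n+1) x - Lsum m l x‖ ≤ ‖Lsum m (n+1) x‖ + ‖Lsum m l x‖ := norm_sub_le _ _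
      _ ≤ (C + 5*(B:ℝ)) * S + C * S :=
          add_le_add hLn1 (hLj l le_rfl hMn)
      _ = (2*C + 5*(B:ℝ)) * S := by ring
  have hsecond : ‖∑ i ∈ Finset.range (p-1),
      ((q (n - l - (i+1)) : ℂ) - (q (n - l - i) : ℂ))
        * (Lsum m (l + (i + 1)) x - Lsum m l x)‖
      ≤ (q (n - l) - q 0) * ((2*C + 5*(B:ℝ)) * S) := by
    calc ‖∑ i ∈ Finset.range (p-1),
        ((q (n - l - (i+1)) : ℂ) - (q (n - l - i) : ℂ))
          * (Lsum m (l + (i + 1)) x - Lsum m l x)‖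
        ≤ ∑ i ∈ Finset.range (p-1), ‖((q (n - l - (i+1)) : ℂ) - (q (n - l - i) : ℂ))
            * (Lsum m (l + (i + 1)) x - Lsum m l x)‖ := norm_sum_le _ _
      _ ≤ ∑ i ∈ Finset.range (p-1),
          (q (n - l - i) - q (n - l - (i+1))) * ((2*C + 5*(B:ℝ)) * S) := by
          refine Finset.sum_le_sum fun i hi => ?_
          rw [norm_mul, hcoef i]
          refine mul_le_mul_of_nonneg_left (hGb i (Finset.mem_range.1 hi)) ?_
          have := hmono (show n - l - (i+1) ≤ n - l - i from by omega)
          linarith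
      _ = (q (n - l) - q 0) * ((2*C + 5*(B:ℝ)) * S) := by
          rw [← Finset.sum_mul]
          congr 1
          have h1 := Finset.sum_range_sub' (fun i => q (n - l - i)) (p-1)
          rw [show (∑ i ∈ Finset.range (p-1), (q (n - l - i) - q (n - l - (i+1))))
            = q (n - l - 0) - q (n - l - (p-1)) from h1, hp1, Nat.sub_self, Nat.sub_zero]
  -- total bound on the numerator
  have htot : ‖∑ j ∈ Finset.Icc l n, (q (n - j) : ℂ) * Dker m j x‖
      ≤ q (n - l) * ((2*C + 5*(B:ℝ)) * S) := by
    rw [habel, habel2]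
    calc ‖(q 0 : ℂ) * (Lsum m (n+1) x - Lsum m l x)
          - ∑ i ∈ Finset.range (p-1), ((q (n - l - (i+1)) : ℂ) - (q (n - l - i) : ℂ))
            * (Lsum m (l + (i + 1)) x - Lsum m l x)‖
        ≤ ‖(q 0 : ℂ) * (Lsum m (n+1) x - Lsum m l x)‖
          + ‖∑ i ∈ Finset.range (p-1), ((q (n - l - (i+1)) : ℂ) - (q (n - l - i) : ℂ))
            * (Lsum m (l + (i + 1)) x - Lsum m l x)‖ := norm_sub_le _ _
      _ ≤ q 0 * ((2*C + 5*(B:ℝ)) * S) + (q (n - l) - q 0) * ((2*C + 5*(B:ℝ)) * S) :=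
          add_le_add hfirst hsecond
      _ = q (n - l) * ((2*C + 5*(B:ℝ)) * S) := by ring
  -- lower bound on Q
  have hQge : (l:ℝ) * q (n - l) ≤ Q q n := by
    have h1 : ∑ k ∈ Finset.Ico (n - l) n, q (n - l) ≤ ∑ k ∈ Finset.Ico (n - l) n, q k :=
      Finset.sum_le_sum fun k hk => hmono (Finset.mem_Ico.1 hk).1
    have h2 : ∑ k ∈ Finset.Ico (n - l) n, q k ≤ ∑ k ∈ Finset.range n, q k :=
      Finset.sum_le_sum_of_subset_of_nonneg
        (by intro k hk; simp only [Finset.mem_Ico] at hk; simp only [Finset.mem_range]; omega)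
        (fun k _ _ => hq k)
    have h3 : ∑ k ∈ Finset.Ico (n - l) n, q (n - l) = (l:ℝ) * q (n - l) := by
      rw [Finset.sum_const, Nat.card_Ico, nsmul_eq_mul,
        show n - (n - l) = l from by omega]
    unfold Q
    linarith
  have hql : 0 < q (n - l) := lt_of_lt_of_le hq0 (hmono (Nat.zero_le _))
  have hlR : (0:ℝ) < (l:ℝ) := by exact_mod_cast hl1
  have hQpos : 0 < Q q n := lt_of_lt_of_le (by positivity) hQge
  -- finish
  rw [norm_mul, norm_inv, Complex.norm_real, Real.norm_eq_abs, _root_.abs_of_pos hQpos]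
  have hT0 : (0:ℝ) ≤ (2*C + 5*(B:ℝ)) * S := by positivity
  calc (Q q n)⁻¹ * ‖∑ j ∈ Finset.Icc l n, (q (n - j) : ℂ) * Dker m j x‖
      ≤ (Q q n)⁻¹ * (q (n - l) * ((2*C + 5*(B:ℝ)) * S)) :=
        mul_le_mul_of_nonneg_left htot (inv_nonneg.2 (le_of_lt hQpos))
    _ ≤ (2*C + 5*(B:ℝ)) / (l:ℝ) * S := by
        rw [inv_mul_le_iff₀ hQpos, div_mul_eq_mul_div, mul_comm (Q q n),
          ← div_le_iff₀ hQpos] at *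
        · have h1 : q (n - l) * ((2*C + 5*(B:ℝ)) * S) * (l:ℝ)
              ≤ ((2*C + 5*(B:ℝ)) * S) * Q q n := by
            nlinarith [mul_le_mul_of_nonneg_right hQge hT0]
          rw [div_le_div_iff₀ hQpos hlR] at *
          · linarith [h1]
    _ = (2*C + 5*(B:ℝ)) / (l:ℝ) * S := rfl

end Vilenkin
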